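/- Let A be a self-adjoint operator on H with domain E and let g be a bounded invertible operator with gE = E and g*Ag = A. If x ∈ ker(g−λ)^m ∩ E and y ∈ ker(g−μ)^n ∩ E with λ·conj(μ) ≠ 1, then (Ax, y) = 0. -/

import Mathlib

open scoped LinearPMap ComplexInnerProductSpace

/-- Let `A` be a densely defined self-adjoint operator with domain `E`, and
`g` a bounded invertible operator with `gE = E` and `g*Ag = A` (i.e. `(Agx, gy) = (Ax, y)`
on `E`).  If `x ∈ ker (g−λ)^m ∩ E`, `y ∈ ker (g−μ)^n ∩ E` and `λ·conj μ ≠ 1`, then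
`(Ax, y) = 0`. -/
theorem stmt5 {H : Type*} [NormedAddCommGroup H] [InnerProductSpace ℂ H] [CompleteSpace H]
    (A : H →ₗ.[ℂ] H) (hdense : Dense (A.domain : Set H)) (hsa : IsSelfAdjoint A)
    (g : H ≃L[ℂ] H)
    (hgE : Submodule.map (((g : H →L[ℂ] H)) : H →ₗ[ℂ] H) A.domain = A.domain)
    (hinv : ∀ (x y : H) (hx : x ∈ A.domain) (hy : y ∈ A.domain)
      (hgx : g x ∈ A.domain) (hgy : g y ∈ A.domain),
      ⟪(A ⟨g x, hgx⟩ : H), g y⟫ = ⟪(A ⟨x, hx⟩ : H), y⟫)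
    (lam mu : ℂ) (hlm : lam * (starRingEnd ℂ) mu ≠ 1) (m n : ℕ)
    (x y : H)
    (hx : x ∈ LinearMap.ker ((((g : H →L[ℂ] H) - lam • (1 : H →L[ℂ] H)) ^ m : H →L[ℂ] H) : H →ₗ[ℂ] H))
    (hxE : x ∈ A.domain)
    (hy : y ∈ LinearMap.ker ((((g : H →L[ℂ] H) - mu • (1 : H →L[ℂ] H)) ^ n : H →L[ℂ] H) : H →ₗ[ℂ] H))
    (hyE : y ∈ A.domain) :
    ⟪(A ⟨x, hxE⟩ : H), y⟫ = 0 := by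
  clear hdense hsa
  suffices Hk : ∀ N m n, m + n ≤ N → ∀ x, x ∈ A.domain → ∀ y, y ∈ A.domain →
      x ∈ LinearMap.ker ((((g : H →L[ℂ] H) - lam • (1 : H →L[ℂ] H)) ^ m : H →L[ℂ] H) : H →ₗ[ℂ] H) →
      y ∈ LinearMap.ker ((((g : H →L[ℂ] H) - mu • (1 : H →L[ℂ] H)) ^ n : H →L[ℂ] H) : H →ₗ[ℂ] H) →
      ∀ (hxE : x ∈ A.domain) (hyE : y ∈ A.domain), ⟪(A ⟨x, hxE⟩ : H), y⟫ = 0 by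
    exact Hk (m + n) m n le_rfl x hxE y hyE hx hy hxE hyE
  intro N
  induction N with
  | zero =>
    intro m n hmn x _ y _ hx hy hxE hyE
    have hm : m = 0 := by omega
    subst hm
    have hx0 : x = 0 := by simpa using hx
    subst hx0
    have : (⟨(0 : H), hxE⟩ : A.domain) = 0 := by ext; rfl
    rw [this, A.map_zero]
    simp
  | succ N ih =>
    intro m n hmn x hxEm y hyEm hx hy hxE hyE
    rcases Nat.eq_zero_or_pos m with hm | hm
    · subst hm
      have hx0 : x = 0 := by simpa using hx
      subst hx0
      have : (⟨(0 : H), hxE⟩ : A.domain) = 0 := by ext; rfl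
      rw [this, A.map_zero]
      simp
    rcases Nat.eq_zero_or_pos n with hn | hn
    · subst hn
      have hy0 : y = 0 := by simpa using hy
      subst hy0
      simp
    obtain ⟨m', rfl⟩ : ∃ m', m = m' + 1 := ⟨m - 1, by omega⟩
    obtain ⟨n', rfl⟩ : ∃ n', n = n' + 1 := ⟨n - 1, by omega⟩
    set p : H →L[ℂ] H := (g : H →L[ℂ] H) - lam • (1 : H →L[ℂ] H) with hp
    set q : H →L[ℂ] H := (g : H →L[ℂ] H) - mu • (1 : H →L[ℂ] H) with hq
    set u : H := g x - lam • x with hu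
    set v : H := g y - mu • y with hv
    have hpx : p x = u := by simp [hp, hu, ContinuousLinearMap.sub_apply]
    have hqy : q y = v := by simp [hq, hv, ContinuousLinearMap.sub_apply]
    have hux : u ∈ LinearMap.ker ((p ^ m' : H →L[ℂ] H) : H →ₗ[ℂ] H) := by
      rw [LinearMap.mem_ker] at hx ⊢
      rw [pow_succ] at hx
      rw [← hpx]
      simpa [ContinuousLinearMap.mul_apply] using hx
    have hvy : v ∈ LinearMap.ker ((q ^ n' : H →L[ℂ] H) : H →ₗ[ℂ] H) := by
      rw [LinearMap.mem_ker] at hy ⊢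
      rw [pow_succ] at hy
      rw [← hqy]
      simpa [ContinuousLinearMap.mul_apply] using hy
    -- kernel memberships at one higher power, needed for ih mixed terms
    have hux' : u ∈ LinearMap.ker ((p ^ (m' + 1) : H →L[ℂ] H) : H →ₗ[ℂ] H) := by
      rw [LinearMap.mem_ker] at hux ⊢
      rw [pow_succ']
      simpa [ContinuousLinearMap.mul_apply] using congrArg p hux |>.trans (map_zero p)
    have hvy' : v ∈ LinearMap.ker ((q ^ (n' + 1) : H →L[ℂ] H) : H →ₗ[ℂ] H) := by
      rw [LinearMap.mem_ker] at hvy ⊢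
      rw [pow_succ']
      simpa [ContinuousLinearMap.mul_apply] using congrArg q hvy |>.trans (map_zero q)
    -- domain memberships
    have hgx : g x ∈ A.domain := by
      rw [← hgE]; exact ⟨x, hxE, rfl⟩
    have hgy : g y ∈ A.domain := by
      rw [← hgE]; exact ⟨y, hyE, rfl⟩
    have huE : u ∈ A.domain := Submodule.sub_mem _ hgx (Submodule.smul_mem _ _ hxE)
    have hvE : v ∈ A.domain := Submodule.sub_mem _ hgy (Submodule.smul_mem _ _ hyE)
    have key := hinv x y hxE hyE hgx hgy
    have hgx' : (⟨g x, hgx⟩ : A.domain) = ⟨u, huE⟩ + lam • ⟨x, hxE⟩ := by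
      ext
      simp [hu]
    have hgy' : g y = v + mu • y := by simp [hv]
    rw [hgx', A.map_add, A.map_smul, hgy'] at key
    push_cast at key
    rw [inner_add_left, inner_smul_left, inner_add_right, inner_add_right,
      inner_smul_right, inner_smul_right] at key
    -- vanishing of mixed terms by induction hypothesis
    have h1 : ⟪(A ⟨u, huE⟩ : H), v⟫ = 0 :=
      ih m' n' (by omega) u huE v hvE hux hvy huE hvE
    have h2 : ⟪(A ⟨u, huE⟩ : H), y⟫ = 0 :=
      ih m' (n' + 1) (by omega) u huE y hyE hux hy huE hyE
    have h3 : ⟪(A ⟨x, hxE⟩ : H), v⟫ = 0 :=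
      ih (m' + 1) n' (by omega) x hxE v hvE hx hvy hxE hvE
    rw [h1, h2, h3] at key
    have hne : (starRingEnd ℂ) lam * mu ≠ 1 := by
      intro h
      apply hlm
      have := congrArg (starRingEnd ℂ) h
      simpa [mul_comm] using this
    have : ((starRingEnd ℂ) lam * mu - 1) * ⟪(A ⟨x, hxE⟩ : H), y⟫ = 0 := by
      linear_combination key
    rcases mul_eq_zero.mp this with h | h
    · exact (hne (sub_eq_zero.mp h)).elim
    · exact h
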